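/- Let β, β̂ ∈ ℝ^p be nonzero vectors and let P(v) = v vᵀ/‖v‖₂² denote the orthogonal projection onto span(v). Then ‖P(β̂) − P(β)‖_F ≤ 4 ‖β̂ − β‖₂ / ‖β‖₂. -/

import Mathlib

open Finset

/-- ‖P(β̂) − P(β)‖_F ≤ 4‖β̂ − β‖₂/‖β‖₂ for rank-one projections. -/
theorem stmt7 {p : ℕ} (β βhat : Fin p → ℝ) (hβ : β ≠ 0) (hβhat : βhat ≠ 0) :
    Real.sqrt (∑ i, ∑ j,
      (βhat i * βhat j / (∑ k, (βhat k)^2) - β i * β j / (∑ k, (β k)^2))^2)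
      ≤ 4 * Real.sqrt (∑ i, (βhat i - β i)^2) / Real.sqrt (∑ i, (β i)^2) := by
  set a : ℝ := ∑ k, (βhat k)^2 with ha_def
  set b : ℝ := ∑ k, (β k)^2 with hb_def
  set c : ℝ := ∑ k, β k * βhat k with hc_def
  set D : ℝ := ∑ i, (βhat i - β i)^2 with hD_def
  have ha : 0 < a := by
    obtain ⟨i, hi⟩ := Function.ne_iff.mp hβhat
    have hi' : βhat i ≠ 0 := by simpa using hi
    calc (0:ℝ) < (βhat i)^2 := by positivity
      _ ≤ a := Finset.single_le_sum (f := fun k => (βhat k)^2)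
          (fun k _ => by positivity) (Finset.mem_univ i)
  have hb : 0 < b := by
    obtain ⟨i, hi⟩ := Function.ne_iff.mp hβ
    have hi' : β i ≠ 0 := by simpa using hi
    calc (0:ℝ) < (β i)^2 := by positivity
      _ ≤ b := Finset.single_le_sum (f := fun k => (β k)^2)
          (fun k _ => by positivity) (Finset.mem_univ i)
  have hCS : c^2 ≤ a * b := by
    have h := Finset.sum_mul_sq_le_sq_mul_sq Finset.univ β βhat
    simpa [hc_def, ha_def, hb_def, mul_comm] using h
  have hD : D = a - 2*c + b := by
    have e : ∀ i : Fin p, (βhat i - β i)^2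
        = (βhat i)^2 - 2*(β i * βhat i) + (β i)^2 := fun i => by ring
    simp only [hD_def, e, Finset.sum_add_distrib, Finset.sum_sub_distrib,
      ← Finset.mul_sum, ha_def, hb_def, hc_def]
  have hDnn : 0 ≤ D := Finset.sum_nonneg (fun i _ => by positivity)
  -- compute the double sum
  have key : (∑ i, ∑ j, (βhat i * βhat j / a - β i * β j / b)^2)
      = 2 - 2*c^2/(a*b) := by
    have pt : ∀ i j : Fin p, (βhat i * βhat j / a - β i * β j / b)^2
        = ((βhat i)^2/a^2) * (βhat j)^2
          - (2*(β i * βhat i)/(a*b)) * (β j * βhat j)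
          + ((β i)^2/b^2) * (β j)^2 := by
      intro i j
      field_simp
      ring
    have inner : ∀ i : Fin p, (∑ j, (βhat i * βhat j / a - β i * β j / b)^2)
        = (a/a^2) * (βhat i)^2 - (2*c/(a*b)) * (β i * βhat i)
          + (b/b^2) * (β i)^2 := by
      intro i
      rw [Finset.sum_congr rfl (fun j _ => pt i j)]
      simp only [pt, Finset.sum_add_distrib, Finset.sum_sub_distrib,
        ← Finset.mul_sum, ha_def, hb_def, hc_def]
      ring
    rw [Finset.sum_congr rfl (fun i _ => inner i)]
    simp only [inner, Finset.sum_add_distrib, Finset.sum_sub_distrib,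
      ← Finset.mul_sum, ha_def, hb_def, hc_def]
    have ha' : (∑ k, βhat k ^ 2) ≠ 0 := ha.ne'
    have hb' : (∑ k, β k ^ 2) ≠ 0 := hb.ne'
    field_simp
    ring
  rw [key]
  -- main inequality
  have hineq : 2 - 2*c^2/(a*b) ≤ 16 * D / b := by
    have h1 : 2 - 2*c^2/(a*b) = (2*a*b - 2*c^2)/(a*b) := by field_simp
    rw [h1, div_le_div_iff₀ (by positivity) hb, hD]
    nlinarith [mul_nonneg hb.le (sq_nonneg (a - c)),
      mul_nonneg hb.le (sub_nonneg.mpr hCS), ha.le, hb.le]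
  have rhs : 4 * Real.sqrt D / Real.sqrt b = Real.sqrt (16 * D / b) := by
    rw [Real.sqrt_div (by positivity) b, Real.sqrt_mul (by norm_num) D,
      show Real.sqrt 16 = 4 by
        rw [show (16:ℝ) = 4^2 by norm_num, Real.sqrt_sq (by norm_num)]]
  rw [rhs]
  exact Real.sqrt_le_sqrt hineq
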